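/- In the feedback network with 0/1 upward weights, 0/f downward weights, and threshold τ = rk: if B is presented at all times ≥ t, then for any concept c and any t' ≥ t, rep(c) fires at time t' if and only if c ∈ S(t' − t), where S(s) = supp_{r,f}(B,*,s). -/
import Mathlib


open scoped Classical
noncomputable section

/-- A concept hierarchy: concepts at levels `0..L`, each concept at level `≥ 1`
has exactly `k` children one level below, level-0 concepts have no children,
there are exactly `k` top-level concepts, and every non-top concept has a parent. -/
structure ConceptHierarchy (α : Type) [DecidableEq α] where
  L : ℕ
  k : ℕ
  concepts : Finset α
  level : α → ℕ
  children : α → Finset α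
  level_le : ∀ c ∈ concepts, level c ≤ L
  children_mem : ∀ c ∈ concepts, ∀ c' ∈ children c, c' ∈ concepts
  children_level : ∀ c ∈ concepts, ∀ c' ∈ children c, level c' + 1 = level c
  children_card : ∀ c ∈ concepts, 1 ≤ level c → (children c).card = k
  children_leaf : ∀ c ∈ concepts, level c = 0 → children c = ∅
  top_card : (concepts.filter (fun c => level c = L)).card = k
  has_parent : ∀ c ∈ concepts, level c < L → ∃ c' ∈ concepts, c ∈ children c'

namespace ConceptHierarchy

variable {α : Type} [DecidableEq α]

/-- The parents of a concept. -/
def parents (H : ConceptHierarchy α) (c : α) : Finset α :=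
  H.concepts.filter (fun c' => c ∈ H.children c')

/-- Limited overlap: each concept at level `≥ 1` shares at most `o·k` children
with the union of the other concepts at the same level. -/
def LimitedOverlap (H : ConceptHierarchy α) (o : ℝ) : Prop :=
  ∀ c ∈ H.concepts, 1 ≤ H.level c →
    (((H.children c).filter (fun d => ∃ c' ∈ H.concepts, c' ≠ c ∧
        H.level c' = H.level c ∧ d ∈ H.children c')).card : ℝ) ≤ o * H.k

/-- Tree hierarchy: no overlap among child sets of distinct same-level concepts. -/
def IsTree (H : ConceptHierarchy α) : Prop :=
  ∀ c ∈ H.concepts, ∀ c' ∈ H.concepts, H.level c = H.level c' → c ≠ c' →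
    Disjoint (H.children c) (H.children c')

/-- Descendant relation: reflexive-transitive closure of the children relation. -/
inductive Desc (H : ConceptHierarchy α) : α → α → Prop
  | refl (c : α) : Desc H c c
  | step {c d e : α} : d ∈ H.children c → Desc H d e → Desc H c e

/-- The level-0 descendants of a concept. -/
def leaves (H : ConceptHierarchy α) (c : α) : Finset α :=
  H.concepts.filter (fun d => H.Desc c d ∧ H.level d = 0)

/-- Level-indexed bottom-up support sets: `S(0) = B ∩ C₀`,
`S(ℓ) = {c at level ℓ : |children(c) ∩ S(ℓ-1)| ≥ r·k}`. -/
def suppL (H : ConceptHierarchy α) (r : ℝ) (B : Finset α) : ℕ → Finset α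
  | 0 => B ∩ H.concepts.filter (fun c => H.level c = 0)
  | (ℓ+1) => H.concepts.filter (fun c => H.level c = ℓ + 1 ∧
      r * H.k ≤ ((H.children c ∩ suppL H r B ℓ).card : ℝ))

/-- `supp_r(B) = ⋃_ℓ S(ℓ)`. -/
def supp (H : ConceptHierarchy α) (r : ℝ) (B : Finset α) : Set α :=
  ⋃ ℓ, ↑(H.suppL r B ℓ)

/-- Time-and-level-indexed support sets with feedback strength `f`:
`S(0,t) = B`; `S(ℓ,0) = ∅` for `ℓ ≥ 1`; and
`S(ℓ,t) = S(ℓ,t-1) ∪ {c at level ℓ : |children(c) ∩ S(ℓ-1,t-1)| + f·|parents(c) ∩ S(ℓ+1,t-1)| ≥ r·k}`. -/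
def suppFB (H : ConceptHierarchy α) (r f : ℝ) (B : Finset α) : ℕ → ℕ → Finset α
  | 0, _ => B
  | (_+1), 0 => ∅
  | (ℓ+1), (t+1) => suppFB H r f B (ℓ+1) t ∪
      H.concepts.filter (fun c => H.level c = ℓ + 1 ∧
        r * H.k ≤ ((H.children c ∩ suppFB H r f B ℓ t).card : ℝ) +
          f * ((H.parents c ∩ suppFB H r f B (ℓ+2) t).card : ℝ))
  termination_by ℓ t => t

/-- `supp_{r,f}(B,*,t) = ⋃_ℓ S(ℓ,t)`. -/
def suppFBatTime (H : ConceptHierarchy α) (r f : ℝ) (B : Finset α) (t : ℕ) : Set α :=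
  ⋃ ℓ, ↑(H.suppFB r f B ℓ t)

/-- `supp_{r,f}(B) = ⋃_{ℓ,t} S(ℓ,t)`. -/
def suppFBSet (H : ConceptHierarchy α) (r f : ℝ) (B : Finset α) : Set α :=
  ⋃ t, H.suppFBatTime r f B t

end ConceptHierarchy

/-- Feed-forward 0/1 weights: weight 1 from the rep of a child to the rep of its
parent, weight 0 otherwise. -/
def ffWeight {α ν : Type} [DecidableEq α] (H : ConceptHierarchy α) (rep : α → ν)
    (u v : ν) : ℝ :=
  if ∃ c ∈ H.concepts, ∃ c' ∈ H.children c, u = rep c' ∧ v = rep c then 1 else 0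

/-- Feedback-network weights: weight 1 upward (rep of child to rep of parent),
weight `f` downward (rep of parent to rep of child), 0 otherwise. -/
def fbWeight {α ν : Type} [DecidableEq α] (H : ConceptHierarchy α) (rep : α → ν)
    (f : ℝ) (u v : ν) : ℝ :=
  if ∃ c ∈ H.concepts, ∃ c' ∈ H.children c, u = rep c' ∧ v = rep c then 1
  else if ∃ c ∈ H.concepts, ∃ c' ∈ H.children c, u = rep c ∧ v = rep c' then f
  else 0
namespace ConceptHierarchy
variable {α : Type} [DecidableEq α]

lemma suppFB_succ_subset (H : ConceptHierarchy α) (r f : ℝ) (B : Finset α) (ℓ : ℕ) :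
    ∀ s, ∀ c ∈ H.suppFB r f B (ℓ+1) s, c ∈ H.concepts ∧ H.level c = ℓ+1 := by
  intro s
  induction s with
  | zero => intro c hc; simp [suppFB] at hc
  | succ s ih =>
    intro c hc
    rw [suppFB] at hc
    rcases Finset.mem_union.mp hc with h | h
    · exact ih c h
    · obtain ⟨h1, h2, -⟩ := Finset.mem_filter.mp h
      exact ⟨h1, h2⟩

lemma suppFB_mono_time (H : ConceptHierarchy α) (r f : ℝ) (B : Finset α) (ℓ s : ℕ) :
    H.suppFB r f B ℓ s ⊆ H.suppFB r f B ℓ (s+1) := by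
  cases ℓ with
  | zero => intro x hx; simp only [suppFB] at hx ⊢; exact hx
  | succ ℓ => intro x hx; rw [suppFB]; exact Finset.mem_union_left _ hx


lemma mem_suppFB_succ_iff (H : ConceptHierarchy α) {r f : ℝ} (hf : 0 ≤ f) (B : Finset α)
    {ℓ : ℕ} {c : α} (hc : c ∈ H.concepts) (hlv : H.level c = ℓ+1) :
    ∀ s, (c ∈ H.suppFB r f B (ℓ+1) (s+1) ↔
      r * H.k ≤ ((H.children c ∩ H.suppFB r f B ℓ s).card : ℝ) +
        f * ((H.parents c ∩ H.suppFB r f B (ℓ+2) s).card : ℝ)) := by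
  intro s
  induction s with
  | zero =>
    constructor
    · intro h
      rw [suppFB] at h
      rcases Finset.mem_union.mp h with h | h
      · exact absurd h (by rw [suppFB]; exact Finset.notMem_empty c)
      · exact (Finset.mem_filter.mp h).2.2
    · intro h
      rw [suppFB]
      exact Finset.mem_union_right _ (Finset.mem_filter.mpr ⟨hc, hlv, h⟩)
  | succ s ih =>
    constructor
    · intro h
      rw [suppFB] at h
      have hcond :
          r * H.k ≤ ((H.children c ∩ H.suppFB r f B ℓ s).card : ℝ) +
            f * ((H.parents c ∩ H.suppFB r f B (ℓ+2) s).card : ℝ) →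
          r * H.k ≤ ((H.children c ∩ H.suppFB r f B ℓ (s+1)).card : ℝ) +
            f * ((H.parents c ∩ H.suppFB r f B (ℓ+2) (s+1)).card : ℝ) := by
        intro hle
        refine hle.trans ?_
        gcongr
        · exact H.suppFB_mono_time r f B ℓ s
        · exact H.suppFB_mono_time r f B (ℓ+2) s
      rcases Finset.mem_union.mp h with h | h
      · exact hcond (ih.mp h)
      · exact (Finset.mem_filter.mp h).2.2
    · intro h
      rw [suppFB]
      exact Finset.mem_union_right _ (Finset.mem_filter.mpr ⟨hc, hlv, h⟩)

lemma mem_atTime_iff (H : ConceptHierarchy α) (r f : ℝ) {B : Finset α}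
    (hB : ∀ b ∈ B, b ∈ H.concepts ∧ H.level b = 0) (d : α) (s : ℕ) :
    d ∈ H.suppFBatTime r f B s ↔ d ∈ H.suppFB r f B (H.level d) s := by
  constructor
  · intro h
    rcases Set.mem_iUnion.mp h with ⟨ℓ', h⟩
    rw [Finset.mem_coe] at h
    cases ℓ' with
    | zero =>
      have hb : d ∈ B := by simpa [suppFB] using h
      rw [(hB d hb).2]
      simpa [suppFB] using hb
    | succ ℓ' =>
      have h2 := H.suppFB_succ_subset r f B ℓ' s d h
      rw [h2.2]; exact h
  · intro h
    exact Set.mem_iUnion.mpr ⟨_, Finset.mem_coe.mpr h⟩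


end ConceptHierarchy
/-- in the feedback network with threshold `τ = rk`, if `B` is
presented at all times `≥ t`, then `rep(c)` fires at time `t + s` iff
`c ∈ S(s) = supp_{r,f}(B,*,s)`. -/
theorem fb_fires_iff_supported {α ν : Type} [DecidableEq α] [DecidableEq ν] [Fintype ν]
    (H : ConceptHierarchy α) (rep : α → ν) (layer : ν → ℕ)
    (hrep_inj : ∀ c ∈ H.concepts, ∀ c' ∈ H.concepts, rep c = rep c' → c = c')
    (hrep_layer : ∀ c ∈ H.concepts, layer (rep c) = H.level c)
    (r f : ℝ) (hf : 0 ≤ f)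
    (firing : ν → ℕ → Prop) (B : Finset α)
    (hB : ∀ b ∈ B, b ∈ H.concepts ∧ H.level b = 0) (t : ℕ)
    (hpres : ∀ u : ν, layer u = 0 → ∀ s : ℕ, t ≤ s → (firing u s ↔ ∃ b ∈ B, u = rep b))
    (hinit : ∀ u : ν, 1 ≤ layer u → ¬ firing u t)
    (hdyn : ∀ u : ν, 1 ≤ layer u → ∀ s : ℕ, (firing u (s + 1) ↔
        r * H.k ≤ ∑ v ∈ Finset.univ.filter
            (fun v => (layer v + 1 = layer u ∨ layer v = layer u + 1) ∧ firing v s),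
          fbWeight H rep f v u)) :
    ∀ c ∈ H.concepts, ∀ s : ℕ,
      (firing (rep c) (t + s) ↔ c ∈ H.suppFBatTime r f B s) := by
  suffices h : ∀ s : ℕ, ∀ c ∈ H.concepts, (firing (rep c) (t + s) ↔ c ∈ H.suppFBatTime r f B s) by
    intro c hc s; exact h s c hc
  intro s
  induction s with
  | zero =>
    intro c hc
    rw [H.mem_atTime_iff r f hB]
    rcases Nat.eq_zero_or_pos (H.level c) with hl | hl
    · rw [hl]
      have hlay : layer (rep c) = 0 := by rw [hrep_layer c hc, hl]
      rw [Nat.add_zero, hpres (rep c) hlay t le_rfl, ConceptHierarchy.suppFB]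
      constructor
      · rintro ⟨b, hbB, hrb⟩
        rwa [hrep_inj c hc b (hB b hbB).1 hrb]
      · intro hcB; exact ⟨c, hcB, rfl⟩
    · obtain ⟨ℓ, hl2⟩ : ∃ ℓ, H.level c = ℓ + 1 := ⟨H.level c - 1, by omega⟩
      rw [hl2]
      have hlay : 1 ≤ layer (rep c) := by rw [hrep_layer c hc]; omega
      constructor
      · intro h
        exact absurd (by simpa using h) (hinit (rep c) hlay)
      · intro h
        exact absurd h (by rw [ConceptHierarchy.suppFB]; exact Finset.notMem_empty c)
  | succ s ih =>
    intro c hc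
    rw [H.mem_atTime_iff r f hB]
    rcases Nat.eq_zero_or_pos (H.level c) with hl | hl
    · rw [hl]
      have hlay : layer (rep c) = 0 := by rw [hrep_layer c hc, hl]
      rw [hpres (rep c) hlay (t + (s+1)) (by omega), ConceptHierarchy.suppFB]
      constructor
      · rintro ⟨b, hbB, hrb⟩
        rwa [hrep_inj c hc b (hB b hbB).1 hrb]
      · intro hcB; exact ⟨c, hcB, rfl⟩
    · obtain ⟨ℓ, hl2⟩ : ∃ ℓ, H.level c = ℓ + 1 := ⟨H.level c - 1, by omega⟩
      rw [hl2]
      have hlayu : layer (rep c) = ℓ + 1 := by rw [hrep_layer c hc, hl2]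
      have hd := hdyn (rep c) (by omega) (t + s)
      rw [show t + (s + 1) = t + s + 1 by omega, hd,
        H.mem_suppFB_succ_iff hf B hc hl2 s]
      set Sc := H.suppFB r f B ℓ s with hSc
      set Sp := H.suppFB r f B (ℓ+2) s with hSp
      have hchild_mem : ∀ d ∈ H.children c, d ∈ H.concepts :=
        fun d hd => H.children_mem c hc d hd
      have hchild_lv : ∀ d ∈ H.children c, H.level d = ℓ := fun d hd => by
        have := H.children_level c hc d hd; omega
      have hpar_mem : ∀ d ∈ H.parents c, d ∈ H.concepts :=
        fun d hd => (Finset.mem_filter.mp hd).1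
      have hpar_lv : ∀ d ∈ H.parents c, H.level d = ℓ + 2 := fun d hd => by
        obtain ⟨hd1, hd2⟩ := Finset.mem_filter.mp hd
        have := H.children_level d hd1 c hd2; omega
      have hfireCh : ∀ d ∈ H.children c, (firing (rep d) (t + s) ↔ d ∈ Sc) := by
        intro d hd
        rw [ih d (hchild_mem d hd), H.mem_atTime_iff r f hB, hchild_lv d hd]
      have hfirePa : ∀ d ∈ H.parents c, (firing (rep d) (t + s) ↔ d ∈ Sp) := by
        intro d hd
        rw [ih d (hpar_mem d hd), H.mem_atTime_iff r f hB, hpar_lv d hd]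
      set Fs := Finset.univ.filter
        (fun v => (layer v + 1 = layer (rep c) ∨ layer v = layer (rep c) + 1) ∧
          firing v (t + s)) with hFs
      set imC := (H.children c ∩ Sc).image rep with himC
      set imP := (H.parents c ∩ Sp).image rep with himP
      have hsubC : imC ⊆ Fs := by
        intro v hv
        obtain ⟨d, hd, rfl⟩ := Finset.mem_image.mp hv
        obtain ⟨hd1, hd2⟩ := Finset.mem_inter.mp hd
        refine Finset.mem_filter.mpr ⟨Finset.mem_univ _, Or.inl ?_, (hfireCh d hd1).mpr hd2⟩
        rw [hrep_layer d (hchild_mem d hd1), hchild_lv d hd1, hlayu]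
      have hsubP : imP ⊆ Fs := by
        intro v hv
        obtain ⟨d, hd, rfl⟩ := Finset.mem_image.mp hv
        obtain ⟨hd1, hd2⟩ := Finset.mem_inter.mp hd
        refine Finset.mem_filter.mpr ⟨Finset.mem_univ _, Or.inr ?_, (hfirePa d hd1).mpr hd2⟩
        rw [hrep_layer d (hpar_mem d hd1), hpar_lv d hd1, hlayu]
      have hw : ∀ v ∈ Fs, fbWeight H rep f v (rep c) =
          (if v ∈ imC then (1:ℝ) else 0) + f * (if v ∈ imP then (1:ℝ) else 0) := by
        intro v hv
        obtain ⟨-, -, hfire⟩ := Finset.mem_filter.mp hv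
        have hCiff : v ∈ imC ↔
            ∃ d ∈ H.concepts, ∃ d' ∈ H.children d, v = rep d' ∧ rep c = rep d := by
          constructor
          · intro hv'
            obtain ⟨d, hd, rfl⟩ := Finset.mem_image.mp hv'
            obtain ⟨hd1, -⟩ := Finset.mem_inter.mp hd
            exact ⟨c, hc, d, hd1, rfl, rfl⟩
          · rintro ⟨d, hdmem, d', hd', rfl, hcd⟩
            have hce : c = d := hrep_inj c hc d hdmem hcd
            subst hce
            exact Finset.mem_image.mpr
              ⟨d', Finset.mem_inter.mpr ⟨hd', (hfireCh d' hd').mp hfire⟩, rfl⟩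
        have hPiff : v ∈ imP ↔
            ∃ d ∈ H.concepts, ∃ d' ∈ H.children d, v = rep d ∧ rep c = rep d' := by
          constructor
          · intro hv'
            obtain ⟨d, hd, rfl⟩ := Finset.mem_image.mp hv'
            obtain ⟨hd1, -⟩ := Finset.mem_inter.mp hd
            obtain ⟨hdc, hdch⟩ := Finset.mem_filter.mp hd1
            exact ⟨d, hdc, c, hdch, rfl, rfl⟩
          · rintro ⟨d, hdmem, d', hd', rfl, hcd⟩
            have hceq : c = d' := hrep_inj c hc d' (H.children_mem d hdmem d' hd') hcd
            subst hceq
            have hdpar : d ∈ H.parents c := Finset.mem_filter.mpr ⟨hdmem, hd'⟩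
            exact Finset.mem_image.mpr
              ⟨d, Finset.mem_inter.mpr ⟨hdpar, (hfirePa d hdpar).mp hfire⟩, rfl⟩
        have hnotboth : ¬ (v ∈ imC ∧ v ∈ imP) := by
          rintro ⟨h1, h2⟩
          obtain ⟨d, hd, hrd⟩ := Finset.mem_image.mp h1
          obtain ⟨e, he, hre⟩ := Finset.mem_image.mp h2
          obtain ⟨hd1, -⟩ := Finset.mem_inter.mp hd
          obtain ⟨he1, -⟩ := Finset.mem_inter.mp he
          have hde : d = e :=
            hrep_inj d (hchild_mem d hd1) e (hpar_mem e he1) (hrd.trans hre.symm)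
          have h3 := hchild_lv d hd1
          have h4 := hpar_lv e he1
          rw [hde] at h3
          omega
        simp only [fbWeight]
        by_cases hA : ∃ d ∈ H.concepts, ∃ d' ∈ H.children d, v = rep d' ∧ rep c = rep d
        · rw [if_pos hA, if_pos (hCiff.mpr hA),
            if_neg (fun hP => hnotboth ⟨hCiff.mpr hA, hP⟩)]
          ring
        · rw [if_neg hA, if_neg (fun hC => hA (hCiff.mp hC))]
          by_cases hBc : ∃ d ∈ H.concepts, ∃ d' ∈ H.children d, v = rep d ∧ rep c = rep d'
          · rw [if_pos hBc, if_pos (hPiff.mpr hBc)]; ring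
          · rw [if_neg hBc, if_neg (fun hP => hBc (hPiff.mp hP))]; ring
      have cardC : ((imC.card : ℝ)) = ((H.children c ∩ Sc).card : ℝ) := by
        rw [himC, Finset.card_image_of_injOn (fun x hx y hy hxy =>
          hrep_inj x (hchild_mem x (Finset.mem_inter.mp hx).1)
            y (hchild_mem y (Finset.mem_inter.mp hy).1) hxy)]
      have cardP : ((imP.card : ℝ)) = ((H.parents c ∩ Sp).card : ℝ) := by
        rw [himP, Finset.card_image_of_injOn (fun x hx y hy hxy =>
          hrep_inj x (hpar_mem x (Finset.mem_inter.mp hx).1)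
            y (hpar_mem y (Finset.mem_inter.mp hy).1) hxy)]
      have hsum : (∑ v ∈ Fs, fbWeight H rep f v (rep c)) =
          ((H.children c ∩ Sc).card : ℝ) + f * ((H.parents c ∩ Sp).card : ℝ) := by
        calc ∑ v ∈ Fs, fbWeight H rep f v (rep c)
            = ∑ v ∈ Fs, ((if v ∈ imC then (1:ℝ) else 0) +
                f * (if v ∈ imP then (1:ℝ) else 0)) := Finset.sum_congr rfl hw
          _ = (∑ v ∈ Fs, (if v ∈ imC then (1:ℝ) else 0)) +
                f * (∑ v ∈ Fs, (if v ∈ imP then (1:ℝ) else 0)) := by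
              rw [Finset.sum_add_distrib, Finset.mul_sum]
          _ = ((imC.card : ℝ)) + f * ((imP.card : ℝ)) := by
              rw [Finset.sum_ite_mem, Finset.sum_ite_mem,
                Finset.inter_eq_right.mpr hsubC, Finset.inter_eq_right.mpr hsubP]
              simp
          _ = ((H.children c ∩ Sc).card : ℝ) + f * ((H.parents c ∩ Sp).card : ℝ) := by
              rw [cardC, cardP]
      rw [hsum]
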